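/- arXiv:1906.12345 — 2 statements merged into one kernel-verified Lean document; each statement's English description precedes it below -/
import Mathlib

section
/- Let f : ℝ^d → ℝ be differentiable, μ-strongly convex (⟨∇f(z) − ∇f(z'), z − z'⟩ ≥ μ‖z − z'‖² for all z, z') with L-Lipschitz gradient, 0 < μ ≤ L, and minimizer z* (∇f(z*) = 0). Let (Ω, F, P) be a probability space with a filtration (F_k)_{k≥1}, and let (z(k))_{k≥1} be an adapted sequence of square-integrable ℝ^d-valued random vectors satisfying z(k+1) = z(k) − (1/(μk)) ḡ(k) for all k ≥ 1, where ḡ(k) is F_{k+1}-measurable, square-integrable, E[ḡ(k) | F_k] = ∇f(z(k)) almost surely, and E[‖ḡ(k) − ∇f(z(k))‖² | F_k] ≤ σ²/n almost surely, for constants σ > 0 and n ≥ 1. Then there exists a constant D ≥ 0 such that for all k ≥ 1, E[‖z(k) − z*‖²] ≤ σ²/(nμ²k) + D/k². -/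
open MeasureTheory
open scoped RealInnerProductSpace

section sgd_helpers

variable {E : Type*} [NormedAddCommGroup E] [InnerProductSpace ℝ E] [CompleteSpace E]



variable {E : Type*} [NormedAddCommGroup E] [InnerProductSpace ℝ E] [CompleteSpace E]

lemma sgd_aux_hasDerivAt (f : E → ℝ) (hdiff : Differentiable ℝ f) (x v : E) (t : ℝ) :
    HasDerivAt (fun s : ℝ => f (x + s • v)) ⟪gradient f (x + t • v), v⟫ t := by
  have hc : HasDerivAt (fun s : ℝ => x + s • v) v t := by
    simpa using ((hasDerivAt_id t).smul_const v).const_add x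
  have hf := (hdiff (x + t • v)).hasGradientAt.hasFDerivAt
  have h2 := hf.comp_hasDerivAt t hc
  simp only [Function.comp_def, InnerProductSpace.toDual_apply_apply] at h2
  exact h2

lemma sgd_taylor_upper (f : E → ℝ) (hdiff : Differentiable ℝ f) (C : ℝ)
    (hlip : ∀ a b : E, ‖gradient f a - gradient f b‖ ≤ C * ‖a - b‖) (x y : E) :
    f y ≤ f x + ⟪gradient f x, y - x⟫ + C / 2 * ‖y - x‖ ^ 2 := by
  set v := y - x with hv
  set ψ : ℝ → ℝ := fun t => f (x + t • v) - t * ⟪gradient f x, v⟫ - C / 2 * t ^ 2 * ‖v‖ ^ 2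
    with hψ
  have hd : ∀ t : ℝ,
      HasDerivAt ψ (⟪gradient f (x + t • v) - gradient f x, v⟫ - C * t * ‖v‖ ^ 2) t := by
    intro t
    have h1 := sgd_aux_hasDerivAt f hdiff x v t
    have h2 : HasDerivAt (fun s : ℝ => s * ⟪gradient f x, v⟫) ⟪gradient f x, v⟫ t := by
      simpa using (hasDerivAt_id t).mul_const (⟪gradient f x, v⟫)
    have h3 : HasDerivAt (fun s : ℝ => C / 2 * s ^ 2 * ‖v‖ ^ 2) (C * t * ‖v‖ ^ 2) t := by
      have := ((hasDerivAt_pow 2 t).const_mul (C / 2)).mul_const (‖v‖ ^ 2)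
      exact this.congr_deriv (by ring)
    have := (h1.sub h2).sub h3
    exact this.congr_deriv (by rw [inner_sub_left])
  have hanti : AntitoneOn ψ (Set.Icc (0:ℝ) 1) := by
    apply antitoneOn_of_deriv_nonpos (convex_Icc 0 1)
    · exact (Differentiable.continuous (fun t => (hd t).differentiableAt)).continuousOn
    · exact fun t _ => (hd t).differentiableAt.differentiableWithinAt
    · intro t ht
      rw [interior_Icc] at ht
      rw [(hd t).deriv]
      have hb : ⟪gradient f (x + t • v) - gradient f x, v⟫ ≤ C * t * ‖v‖ ^ 2 := by
        calc ⟪gradient f (x + t • v) - gradient f x, v⟫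
            ≤ ‖gradient f (x + t • v) - gradient f x‖ * ‖v‖ := real_inner_le_norm _ _
          _ ≤ (C * ‖(x + t • v) - x‖) * ‖v‖ := by
              have := hlip (x + t • v) x
              have hv0 : (0:ℝ) ≤ ‖v‖ := norm_nonneg _
              nlinarith
          _ = C * t * ‖v‖ ^ 2 := by
              rw [add_sub_cancel_left, norm_smul, Real.norm_eq_abs, abs_of_pos ht.1]
              ring
      linarith
  have h01 := hanti (Set.left_mem_Icc.2 zero_le_one) (Set.right_mem_Icc.2 zero_le_one)
    zero_le_one
  have hx0 : x + (0:ℝ) • v = x := by simp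
  have hx1 : x + (1:ℝ) • v = y := by simp [hv]
  simp only [hψ, hx0, hx1, one_pow, one_mul, zero_pow, mul_zero, zero_mul, sub_zero,
    ne_eq, OfNat.ofNat_ne_zero, not_false_eq_true] at h01
  linarith

lemma sgd_taylor_lower (f : E → ℝ) (hdiff : Differentiable ℝ f) (μ : ℝ)
    (hsc : ∀ a b : E, μ * ‖a - b‖ ^ 2 ≤ ⟪gradient f a - gradient f b, a - b⟫) (x y : E) :
    f x + ⟪gradient f x, y - x⟫ + μ / 2 * ‖y - x‖ ^ 2 ≤ f y := by
  set v := y - x with hv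
  set ψ : ℝ → ℝ := fun t => f (x + t • v) - t * ⟪gradient f x, v⟫ - μ / 2 * t ^ 2 * ‖v‖ ^ 2
    with hψ
  have hd : ∀ t : ℝ,
      HasDerivAt ψ (⟪gradient f (x + t • v) - gradient f x, v⟫ - μ * t * ‖v‖ ^ 2) t := by
    intro t
    have h1 := sgd_aux_hasDerivAt f hdiff x v t
    have h2 : HasDerivAt (fun s : ℝ => s * ⟪gradient f x, v⟫) ⟪gradient f x, v⟫ t := by
      simpa using (hasDerivAt_id t).mul_const (⟪gradient f x, v⟫)
    have h3 : HasDerivAt (fun s : ℝ => μ / 2 * s ^ 2 * ‖v‖ ^ 2) (μ * t * ‖v‖ ^ 2) t := by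
      have := ((hasDerivAt_pow 2 t).const_mul (μ / 2)).mul_const (‖v‖ ^ 2)
      exact this.congr_deriv (by ring)
    have := (h1.sub h2).sub h3
    exact this.congr_deriv (by rw [inner_sub_left])
  have hmono : MonotoneOn ψ (Set.Icc (0:ℝ) 1) := by
    apply monotoneOn_of_deriv_nonneg (convex_Icc 0 1)
    · exact (Differentiable.continuous (fun t => (hd t).differentiableAt)).continuousOn
    · exact fun t _ => (hd t).differentiableAt.differentiableWithinAt
    · intro t ht
      rw [interior_Icc] at ht
      rw [(hd t).deriv]
      have hb := hsc (x + t • v) x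
      rw [add_sub_cancel_left] at hb
      rw [inner_smul_right, norm_smul, Real.norm_eq_abs, abs_of_pos ht.1] at hb
      have ht0 := ht.1
      nlinarith
  have h01 := hmono (Set.left_mem_Icc.2 zero_le_one) (Set.right_mem_Icc.2 zero_le_one)
    zero_le_one
  have hx0 : x + (0:ℝ) • v = x := by simp
  have hx1 : x + (1:ℝ) • v = y := by simp [hv]
  simp only [hψ, hx0, hx1, one_pow, one_mul, zero_pow, mul_zero, zero_mul, sub_zero,
    ne_eq, OfNat.ofNat_ne_zero, not_false_eq_true] at h01
  linarith


lemma sgd_coco (h : E → ℝ) (Gh : E → E) (L : ℝ) (hL : 0 < L)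
    (low : ∀ x y : E, h x + ⟪Gh x, y - x⟫ ≤ h y)
    (up : ∀ x y : E, h y ≤ h x + ⟪Gh x, y - x⟫ + L / 2 * ‖y - x‖ ^ 2) :
    ∀ x y : E, ‖Gh y - Gh x‖ ^ 2 ≤ L * ⟪Gh y - Gh x, y - x⟫ := by
  have half : ∀ x y : E, ‖Gh y - Gh x‖ ^ 2 / (2 * L) ≤ h y - h x - ⟪Gh x, y - x⟫ := by
    intro x y
    set w := Gh y - Gh x with hw
    have h1 := low x (y - L⁻¹ • w)
    have h2 := up y (y - L⁻¹ • w)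
    have e1 : ⟪Gh x, y - L⁻¹ • w - x⟫ = ⟪Gh x, y - x⟫ - L⁻¹ * ⟪Gh x, w⟫ := by
      rw [show y - L⁻¹ • w - x = (y - x) - L⁻¹ • w by abel, inner_sub_right,
        real_inner_smul_right]
    have e2 : ⟪Gh y, y - L⁻¹ • w - y⟫ = -(L⁻¹ * ⟪Gh y, w⟫) := by
      rw [show y - L⁻¹ • w - y = -(L⁻¹ • w) by abel, inner_neg_right, real_inner_smul_right]
    have e3 : ‖y - L⁻¹ • w - y‖ ^ 2 = L⁻¹ ^ 2 * ‖w‖ ^ 2 := by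
      rw [show y - L⁻¹ • w - y = -(L⁻¹ • w) by abel, norm_neg, norm_smul, mul_pow,
        Real.norm_eq_abs, sq_abs]
    have e4 : ⟪Gh y, w⟫ - ⟪Gh x, w⟫ = ‖w‖ ^ 2 := by
      rw [← inner_sub_left, ← hw, real_inner_self_eq_norm_sq]
    rw [e1] at h1
    rw [e2, e3] at h2
    have hL' : L ≠ 0 := ne_of_gt hL
    have : L⁻¹ * ⟪Gh y, w⟫ - L⁻¹ * ⟪Gh x, w⟫ = L⁻¹ * ‖w‖ ^ 2 := by
      rw [← mul_sub, e4]
    have hinv : L⁻¹ = 1 / L := one_div L ▸ rfl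
    have hLL : L * L⁻¹ = 1 := mul_inv_cancel₀ hL'
    have e8 : L / 2 * (L⁻¹ ^ 2 * ‖w‖ ^ 2) = L⁻¹ / 2 * ‖w‖ ^ 2 := by
      field_simp
    have key : L⁻¹ / 2 * ‖w‖ ^ 2 ≤ h y - h x - ⟪Gh x, y - x⟫ := by
      rw [e8] at h2
      linarith
    calc ‖w‖ ^ 2 / (2 * L) = L⁻¹ / 2 * ‖w‖ ^ 2 := by
          rw [hinv]
          ring
      _ ≤ _ := key
  intro x y
  have hxy := half x y
  have hyx := half y x
  have e5 : ⟪Gh y, x - y⟫ = -⟪Gh y, y - x⟫ := by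
    rw [show x - y = -(y - x) by abel, inner_neg_right]
  have e6 : ‖Gh x - Gh y‖ = ‖Gh y - Gh x‖ := by rw [← norm_neg]; congr 1; abel
  rw [e5, e6] at hyx
  have e7 : ⟪Gh y - Gh x, y - x⟫ = ⟪Gh y, y - x⟫ - ⟪Gh x, y - x⟫ := inner_sub_left _ _ _
  rw [div_le_iff₀ (by positivity : (0:ℝ) < 2 * L)] at hxy hyx
  rw [e7]
  nlinarith


lemma sgd_norm_sq_expand (x y : E) : ‖y‖ ^ 2 = ‖x‖ ^ 2 + 2 * ⟪x, y - x⟫ + ‖y - x‖ ^ 2 := by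
  have := norm_add_sq_real x (y - x)
  rw [add_sub_cancel] at this
  linarith

lemma sgd_interp (f : E → ℝ) (μ L : ℝ) (hμ : 0 < μ) (hμL : μ ≤ L)
    (hdiff : Differentiable ℝ f)
    (hsc : ∀ a b : E, μ * ‖a - b‖ ^ 2 ≤ ⟪gradient f a - gradient f b, a - b⟫)
    (hlip : ∀ a b : E, ‖gradient f a - gradient f b‖ ≤ L * ‖a - b‖)
    (zstar : E) (hzstar : gradient f zstar = 0) (w : E) :
    ‖gradient f w‖ ^ 2 + μ * (L + μ) * ‖w - zstar‖ ^ 2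
      ≤ (L + 2 * μ) * ⟪gradient f w, w - zstar⟫ := by
  set h : E → ℝ := fun a => f a - μ / 2 * ‖a‖ ^ 2 with hh
  set Gh : E → E := fun a => gradient f a - μ • a with hGh
  have hL : 0 < L := lt_of_lt_of_le hμ hμL
  have hinner : ∀ a b : E, ⟪Gh a, b - a⟫ = ⟪gradient f a, b - a⟫ - μ * ⟪a, b - a⟫ := by
    intro a b
    rw [hGh]
    simp only []
    rw [inner_sub_left, real_inner_smul_left]
  have low : ∀ a b : E, h a + ⟪Gh a, b - a⟫ ≤ h b := by
    intro a b
    have := sgd_taylor_lower f hdiff μ hsc a b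
    have hq := sgd_norm_sq_expand a b
    rw [hh]
    simp only []
    rw [hinner]
    nlinarith
  have up : ∀ a b : E, h b ≤ h a + ⟪Gh a, b - a⟫ + L / 2 * ‖b - a‖ ^ 2 := by
    intro a b
    have := sgd_taylor_upper f hdiff L hlip a b
    have hq := sgd_norm_sq_expand a b
    rw [hh]
    simp only []
    rw [hinner]
    nlinarith [sq_nonneg ‖b - a‖]
  have hc := sgd_coco h Gh L hL low up zstar w
  have hGhd : Gh w - Gh zstar = gradient f w - μ • (w - zstar) := by
    rw [hGh]
    simp only [hzstar]
    rw [smul_sub]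
    abel
  rw [hGhd] at hc
  set G := gradient f w
  set u := w - zstar
  have e1 : ‖G - μ • u‖ ^ 2 = ‖G‖ ^ 2 - 2 * (μ * ⟪G, u⟫) + μ ^ 2 * ‖u‖ ^ 2 := by
    rw [norm_sub_sq_real, real_inner_smul_right, norm_smul, mul_pow, Real.norm_eq_abs, sq_abs]
  have e2 : ⟪G - μ • u, u⟫ = ⟪G, u⟫ - μ * ‖u‖ ^ 2 := by
    rw [inner_sub_left, real_inner_smul_left, real_inner_self_eq_norm_sq]
  rw [e1, e2] at hc
  nlinarith

lemma sgd_contract_arith (μ L U GG s α : ℝ) (hμ : 0 < μ) (hα0 : 0 ≤ α)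
    (h1 : μ * U ≤ s) (h2 : GG + μ * (L + μ) * U ≤ (L + 2 * μ) * s)
    (h3 : α * (L + 2 * μ) ≤ 2) :
    U - 2 * (α * s) + α ^ 2 * GG ≤ (1 - α * μ) ^ 2 * U := by
  nlinarith [mul_nonneg (mul_nonneg hα0 (by linarith : (0:ℝ) ≤ 2 - α * (L + 2 * μ)))
      (by linarith : (0:ℝ) ≤ s - μ * U),
    mul_nonneg (sq_nonneg α)
      (by linarith : (0:ℝ) ≤ (L + 2 * μ) * s - GG - μ * (L + μ) * U)]

lemma sgd_contract (f : E → ℝ) (μ L : ℝ) (hμ : 0 < μ) (hμL : μ ≤ L)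
    (hdiff : Differentiable ℝ f)
    (hsc : ∀ a b : E, μ * ‖a - b‖ ^ 2 ≤ ⟪gradient f a - gradient f b, a - b⟫)
    (hlip : ∀ a b : E, ‖gradient f a - gradient f b‖ ≤ L * ‖a - b‖)
    (zstar : E) (hzstar : gradient f zstar = 0) (k : ℕ)
    (hk : L + 2 * μ ≤ 2 * μ * k) (w : E) :
    ‖(w - zstar) - (1 / (μ * k)) • gradient f w‖ ^ 2
      ≤ (1 - 1 / (k : ℝ)) ^ 2 * ‖w - zstar‖ ^ 2 := by
  have hL : 0 < L := lt_of_lt_of_le hμ hμL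
  have hk0 : (0:ℝ) < (k : ℝ) := by nlinarith
  have hμ0 : μ ≠ 0 := ne_of_gt hμ
  have hkne : (k:ℝ) ≠ 0 := ne_of_gt hk0
  set α : ℝ := 1 / (μ * k) with hα
  have hα0 : 0 ≤ α := by positivity
  have hαμ : α * μ = 1 / (k : ℝ) := by
    rw [hα]
    field_simp
  have h1 : μ * ‖w - zstar‖ ^ 2 ≤ ⟪gradient f w, w - zstar⟫ := by
    have := hsc w zstar
    rwa [hzstar, sub_zero] at this
  have h2 := sgd_interp f μ L hμ hμL hdiff hsc hlip zstar hzstar w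
  have h3 : α * (L + 2 * μ) ≤ 2 := by
    rw [hα, div_mul_eq_mul_div, div_le_iff₀ (by positivity : (0:ℝ) < μ * k), one_mul]
    nlinarith
  have e1 : ‖(w - zstar) - α • gradient f w‖ ^ 2
      = ‖w - zstar‖ ^ 2 - 2 * (α * ⟪gradient f w, w - zstar⟫)
        + α ^ 2 * ‖gradient f w‖ ^ 2 := by
    rw [norm_sub_sq_real, real_inner_smul_right, norm_smul, mul_pow, Real.norm_eq_abs, sq_abs,
      real_inner_comm]
  rw [e1, ← hαμ]
  exact sgd_contract_arith μ L (‖w - zstar‖ ^ 2) (‖gradient f w‖ ^ 2)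
    (⟪gradient f w, w - zstar⟫) α hμ hα0 h1 h2 h3

end sgd_helpers

section sgd_prob_helpers

variable {Ω : Type*} {F : MeasurableSpace Ω} {P : Measure Ω}
variable {E : Type*} [NormedAddCommGroup E] [InnerProductSpace ℝ E]



lemma sgd_int_inner {u v : Ω → E} (hu : MemLp u 2 P) (hv : MemLp v 2 P) :
    Integrable (fun ω => ⟪u ω, v ω⟫) P := by
  have h := L2.integrable_inner (𝕜 := ℝ) (hu.toLp u) (hv.toLp v)
  refine h.congr ?_
  filter_upwards [hu.coeFn_toLp, hv.coeFn_toLp] with ω h1 h2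
  rw [h1, h2]

lemma sgd_int_sq {u : Ω → E} (hu : MemLp u 2 P) :
    Integrable (fun ω => ‖u ω‖ ^ 2) P := by
  refine (sgd_int_inner hu hu).congr ?_
  filter_upwards [] with ω
  rw [real_inner_self_eq_norm_sq]

lemma sgd_int_mul {u v : Ω → ℝ} (hu : MemLp u 2 P) (hv : MemLp v 2 P) :
    Integrable (fun ω => u ω * v ω) P := by
  have h := sgd_int_inner hu hv
  simpa [RCLike.inner_apply, mul_comm] using h

lemma sgd_cross {Ω : Type*} {m F : MeasurableSpace Ω} {P : Measure Ω}
    [IsProbabilityMeasure P] (hm : m ≤ F) {d : ℕ}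
    {Y W h : Ω → EuclideanSpace ℝ (Fin d)}
    (hY2 : MemLp Y 2 P) (hW : StronglyMeasurable[m] W) (hW2 : MemLp W 2 P)
    (hh : StronglyMeasurable[m] h) (hh2 : MemLp h 2 P)
    (hcond : P[Y|m] =ᵐ[P] W) :
    ∫ ω, ⟪h ω, Y ω⟫ ∂P = ∫ ω, ⟪h ω, W ω⟫ ∂P := by
  have hYint : Integrable Y P := hY2.integrable one_le_two
  have hWint : Integrable W P := hW2.integrable one_le_two
  have hYi2 : ∀ i, MemLp (fun ω => Y ω i) 2 P := fun i => by
    have := (EuclideanSpace.proj i (𝕜 := ℝ)).comp_memLp' hY2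
    exact this
  have hWi2 : ∀ i, MemLp (fun ω => W ω i) 2 P := fun i => by
    have := (EuclideanSpace.proj i (𝕜 := ℝ)).comp_memLp' hW2
    exact this
  have hhi2 : ∀ i, MemLp (fun ω => h ω i) 2 P := fun i => by
    have := (EuclideanSpace.proj i (𝕜 := ℝ)).comp_memLp' hh2
    exact this
  have hhiY : ∀ i, Integrable (fun ω => h ω i * Y ω i) P := fun i =>
    sgd_int_mul (hhi2 i) (hYi2 i)
  have hhiW : ∀ i, Integrable (fun ω => h ω i * W ω i) P := fun i =>
    sgd_int_mul (hhi2 i) (hWi2 i)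
  have hinner : ∀ (a b : EuclideanSpace ℝ (Fin d)), ⟪a, b⟫ = ∑ i, a i * b i := by
    intro a b
    rw [PiLp.inner_apply]
    simp [RCLike.inner_apply, mul_comm]
  calc ∫ ω, ⟪h ω, Y ω⟫ ∂P = ∫ ω, ∑ i, h ω i * Y ω i ∂P := by simp_rw [hinner]
    _ = ∑ i, ∫ ω, h ω i * Y ω i ∂P := integral_finset_sum _ (fun i _ => hhiY i)
    _ = ∑ i, ∫ ω, h ω i * W ω i ∂P := by
        refine Finset.sum_congr rfl (fun i _ => ?_)
        -- per coordinate
        have hYi_int : Integrable (fun ω => Y ω i) P := (hYi2 i).integrable one_le_two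
        have hWi_int : Integrable (fun ω => W ω i) P := (hWi2 i).integrable one_le_two
        have hWi_meas : StronglyMeasurable[m] (fun ω => W ω i) :=
          ((EuclideanSpace.proj i (𝕜 := ℝ)).continuous.comp_stronglyMeasurable hW)
        have hhi_meas : StronglyMeasurable[m] (fun ω => h ω i) :=
          ((EuclideanSpace.proj i (𝕜 := ℝ)).continuous.comp_stronglyMeasurable hh)
        have hWi_cond : (fun ω => W ω i) =ᵐ[P] P[fun ω => Y ω i|m] := by
          refine ae_eq_condExp_of_forall_setIntegral_eq (μ := P) hm hYi_int
            (fun s _ _ => hWi_int.integrableOn) (fun s hs hμs => ?_)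
            hWi_meas.aestronglyMeasurable
          have hvec : ∫ ω in s, W ω ∂P = ∫ ω in s, Y ω ∂P := by
            rw [← setIntegral_condExp (μ := P) hm hYint hs]
            refine setIntegral_congr_ae (μ := P) (hm s hs) ?_
            filter_upwards [hcond] with ω hω _
            rw [hω]
          have h1 := (EuclideanSpace.proj i (𝕜 := ℝ)).integral_comp_comm
            (μ := P.restrict s) (hYint.integrableOn (s := s))
          have h2 := (EuclideanSpace.proj i (𝕜 := ℝ)).integral_comp_comm
            (μ := P.restrict s) (hWint.integrableOn (s := s))
          calc ∫ ω in s, W ω i ∂P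
              = EuclideanSpace.proj i (𝕜 := ℝ) (∫ ω in s, W ω ∂P) := by
                rw [← h2]; rfl
            _ = EuclideanSpace.proj i (𝕜 := ℝ) (∫ ω in s, Y ω ∂P) := by rw [hvec]
            _ = ∫ ω in s, Y ω i ∂P := by rw [← h1]; rfl
        have hpull : P[(fun ω => h ω i) * (fun ω => Y ω i)|m]
            =ᵐ[P] (fun ω => h ω i) * P[fun ω => Y ω i|m] :=
          condExp_mul_of_stronglyMeasurable_left hhi_meas (by exact hhiY i)
            hYi_int
        calc ∫ ω, h ω i * Y ω i ∂P
            = ∫ ω, ((fun ω => h ω i) * (fun ω => Y ω i)) ω ∂P := by rfl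
          _ = ∫ ω, (P[(fun ω => h ω i) * (fun ω => Y ω i)|m]) ω ∂P :=
              (integral_condExp hm).symm
          _ = ∫ ω, h ω i * W ω i ∂P := by
              refine integral_congr_ae ?_
              filter_upwards [hpull, hWi_cond] with ω h1 h2
              rw [h1, Pi.mul_apply, ← h2]
    _ = ∫ ω, ∑ i, h ω i * W ω i ∂P := (integral_finset_sum _ (fun i _ => hhiW i)).symm
    _ = ∫ ω, ⟪h ω, W ω⟫ ∂P := by simp_rw [hinner]

end sgd_prob_helpers


lemma sgd_ind_arith (A D r k : ℝ) (hk : 1 ≤ k) (hA : 0 ≤ A) (hD : 2 * A ≤ D)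
    (hr : r ≤ A / k + D / k ^ 2) :
    (1 - 1 / k) ^ 2 * r + A / k ^ 2 ≤ A / (k + 1) + D / (k + 1) ^ 2 := by
  have hk0 : (0:ℝ) < k := lt_of_lt_of_le one_pos hk
  have hk0' : k ≠ 0 := ne_of_gt hk0
  have hk1 : (0:ℝ) < k + 1 := by linarith
  have hk1' : k + 1 ≠ 0 := ne_of_gt hk1
  have h1 : (1 - 1/k)^2 * r ≤ (1 - 1/k)^2 * (A/k + D/k^2) :=
    mul_le_mul_of_nonneg_left hr (sq_nonneg _)
  have h2 : (1 - 1/k)^2 * (A/k + D/k^2) + A/k^2 ≤ A/(k+1) + D/(k+1)^2 := by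
    rw [← sub_nonneg]
    have expand : A/(k+1) + D/(k+1)^2 - ((1 - 1/k)^2 * (A/k + D/k^2) + A/k^2)
        = (D*(2*k^2 - 1) - A*k*(k+1)) / (k^4*(k+1)^2) := by
      field_simp
      ring
    rw [expand]
    apply div_nonneg _ (by positivity)
    nlinarith [mul_nonneg (mul_nonneg hA (by linarith : (0:ℝ) ≤ 3*k + 2))
      (by linarith : (0:ℝ) ≤ k - 1),
      mul_nonneg (by linarith : (0:ℝ) ≤ D - 2*A) (by nlinarith : (0:ℝ) ≤ 2*k^2 - 1)]
  linarith




/-- Theorem 1 of the paper: centralized stochastic gradient descent with stepsizes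
`α_k = 1/(μk)` on a `μ`-strongly convex function with `L`-Lipschitz gradient, driven by
unbiased gradient estimates whose conditional variance is at most `σ²/n`, satisfies
`E[‖z(k) − z*‖²] ≤ σ²/(nμ²k) + O(1/k²)`. -/
theorem sgd_convergence_rate
    {d : ℕ} (f : EuclideanSpace ℝ (Fin d) → ℝ) (μ L : ℝ)
    (hμ : 0 < μ) (hμL : μ ≤ L)
    (hdiff : Differentiable ℝ f)
    (hsc : ∀ z z' : EuclideanSpace ℝ (Fin d),
      μ * ‖z - z'‖ ^ 2 ≤ ⟪gradient f z - gradient f z', z - z'⟫)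
    (hlip : ∀ z z' : EuclideanSpace ℝ (Fin d),
      ‖gradient f z - gradient f z'‖ ≤ L * ‖z - z'‖)
    (zstar : EuclideanSpace ℝ (Fin d)) (hzstar : gradient f zstar = 0)
    {Ω : Type*} {F : MeasurableSpace Ω} (P : Measure Ω) [IsProbabilityMeasure P]
    (ℱ : Filtration ℕ F)
    (z g : ℕ → Ω → EuclideanSpace ℝ (Fin d))
    (hz_adapted : ∀ k, 1 ≤ k → StronglyMeasurable[ℱ k] (z k))
    (hz_L2 : ∀ k, 1 ≤ k → MemLp (z k) 2 P)
    (hg_meas : ∀ k, 1 ≤ k → StronglyMeasurable[ℱ (k + 1)] (g k))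
    (hg_L2 : ∀ k, 1 ≤ k → MemLp (g k) 2 P)
    (hupdate : ∀ k, 1 ≤ k → ∀ ω, z (k + 1) ω = z k ω - (1 / (μ * k)) • g k ω)
    (σ : ℝ) (hσ : 0 < σ) (n : ℕ) (hn : 1 ≤ n)
    (hunbiased : ∀ k, 1 ≤ k →
      P[g k | ℱ k] =ᵐ[P] fun ω => gradient f (z k ω))
    (hvar : ∀ k, 1 ≤ k →
      P[(fun ω => ‖g k ω - gradient f (z k ω)‖ ^ 2) | ℱ k] ≤ᵐ[P]
        fun _ => σ ^ 2 / n) :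
    ∃ D : ℝ, 0 ≤ D ∧ ∀ k : ℕ, 1 ≤ k →
      ∫ ω, ‖z k ω - zstar‖ ^ 2 ∂P ≤
        σ ^ 2 / (n * μ ^ 2 * k) + D / (k : ℝ) ^ 2 := by
  classical
  have hL : 0 < L := lt_of_lt_of_le hμ hμL
  have hn0 : (0:ℝ) < (n:ℝ) := by exact_mod_cast Nat.lt_of_lt_of_le Nat.zero_lt_one hn
  set A : ℝ := σ ^ 2 / (n * μ ^ 2) with hA
  have hA0 : 0 ≤ A := by positivity
  set R : ℕ → ℝ := fun k => ∫ ω, ‖z k ω - zstar‖ ^ 2 ∂P with hR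
  have hR0 : ∀ k, 0 ≤ R k := fun k => integral_nonneg (fun ω => sq_nonneg _)
  set k0 : ℕ := ⌈(L + 2 * μ) / (2 * μ)⌉₊ with hk0def
  have hk01 : 1 ≤ k0 := by
    rw [hk0def, Nat.one_le_ceil_iff]
    positivity
  have hk0bound : ∀ k : ℕ, k0 ≤ k → L + 2 * μ ≤ 2 * μ * k := by
    intro k hk
    have h1 : (L + 2 * μ) / (2 * μ) ≤ (k0 : ℝ) := Nat.le_ceil _
    have h2 : (k0 : ℝ) ≤ (k : ℝ) := by exact_mod_cast hk
    rw [div_le_iff₀ (by positivity : (0:ℝ) < 2 * μ)] at h1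
    nlinarith
  -- gradient is continuous
  have hL0 : 0 ≤ L := le_of_lt hL
  have hGcont : Continuous (gradient f) := by
    have : LipschitzWith (Real.toNNReal L) (gradient f) := by
      apply LipschitzWith.of_dist_le_mul
      intro a b
      rw [dist_eq_norm, dist_eq_norm, Real.coe_toNNReal L hL0]
      exact hlip a b
    exact this.continuous
  -- one-step recursion
  have step : ∀ k : ℕ, 1 ≤ k → k0 ≤ k →
      R (k + 1) ≤ (1 - 1/(k:ℝ)) ^ 2 * R k + A / (k:ℝ) ^ 2 := by
    intro k hk1 hkk0
    have hkR : (0:ℝ) < (k:ℝ) := by exact_mod_cast Nat.lt_of_lt_of_le Nat.zero_lt_one hk1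
    set m := ℱ k
    have hm : m ≤ F := ℱ.le k
    set α : ℝ := 1 / (μ * k) with hαdef
    set Gk : Ω → EuclideanSpace ℝ (Fin d) := fun ω => gradient f (z k ω) with hGk
    set uk : Ω → EuclideanSpace ℝ (Fin d) := fun ω => z k ω - zstar with huk
    set hk' : Ω → EuclideanSpace ℝ (Fin d) := fun ω => uk ω - α • Gk ω with hhk
    set X : Ω → EuclideanSpace ℝ (Fin d) := fun ω => g k ω - Gk ω with hX
    have hzk := hz_adapted k hk1
    have hGk_meas : StronglyMeasurable[m] Gk := hGcont.comp_stronglyMeasurable hzk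
    have huk_meas : StronglyMeasurable[m] uk := hzk.sub stronglyMeasurable_const
    have hhk_meas : StronglyMeasurable[m] hk' := huk_meas.sub (hGk_meas.const_smul α)
    have hu2 : MemLp uk 2 P := (hz_L2 k hk1).sub (memLp_const zstar)
    have hG2 : MemLp Gk 2 P := by
      refine MemLp.of_le_mul (c := L) hu2 ((hGk_meas.mono hm).aestronglyMeasurable) ?_
      filter_upwards [] with ω
      have := hlip (z k ω) zstar
      rw [hzstar, sub_zero] at this
      simpa [hGk, huk] using this
    have hh2 : MemLp hk' 2 P := hu2.sub (hG2.const_smul α)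
    have hX2 : MemLp X 2 P := (hg_L2 k hk1).sub hG2
    -- pointwise decomposition
    have hpt : ∀ ω, ‖z (k+1) ω - zstar‖ ^ 2
        = ‖hk' ω‖ ^ 2 - (2*α) * ⟪hk' ω, X ω⟫ + α ^ 2 * ‖X ω‖ ^ 2 := by
      intro ω
      have hzz : z (k+1) ω - zstar = hk' ω - α • X ω := by
        rw [hupdate k hk1 ω]
        simp only [hhk, hX, huk, hGk, smul_sub, hαdef]
        abel
      rw [hzz, norm_sub_sq_real, real_inner_smul_right, norm_smul, mul_pow,
        Real.norm_eq_abs, sq_abs]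
      ring
    -- integrability
    have I1 : Integrable (fun ω => ‖hk' ω‖ ^ 2) P := sgd_int_sq hh2
    have I2 : Integrable (fun ω => ⟪hk' ω, X ω⟫) P := sgd_int_inner hh2 hX2
    have I3 : Integrable (fun ω => ‖X ω‖ ^ 2) P := sgd_int_sq hX2
    have hsplit : R (k+1) = ∫ ω, ‖hk' ω‖ ^ 2 ∂P - (2*α) * ∫ ω, ⟪hk' ω, X ω⟫ ∂P
        + α ^ 2 * ∫ ω, ‖X ω‖ ^ 2 ∂P := by
      have : R (k+1) = ∫ ω, (‖hk' ω‖ ^ 2 - (2*α) * ⟪hk' ω, X ω⟫ + α ^ 2 * ‖X ω‖ ^ 2) ∂P := by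
        rw [hR]
        exact integral_congr_ae (Filter.Eventually.of_forall hpt)
      rw [this, integral_add (f := fun ω => ‖hk' ω‖ ^ 2 - (2*α) * ⟪hk' ω, X ω⟫)
          (g := fun ω => α ^ 2 * ‖X ω‖ ^ 2) (I1.sub (I2.const_mul (2*α)))
          (I3.const_mul (α^2)),
        integral_sub I1 (I2.const_mul (2*α)), integral_const_mul, integral_const_mul]
    -- cross term is zero
    have hcross : ∫ ω, ⟪hk' ω, X ω⟫ ∂P = 0 := by
      have hXsplit : ∀ ω, ⟪hk' ω, X ω⟫ = ⟪hk' ω, g k ω⟫ - ⟪hk' ω, Gk ω⟫ := by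
        intro ω
        rw [hX]
        exact inner_sub_right _ _ _
      rw [integral_congr_ae (Filter.Eventually.of_forall hXsplit),
        integral_sub (sgd_int_inner hh2 (hg_L2 k hk1)) (sgd_int_inner hh2 hG2),
        sgd_cross hm (hg_L2 k hk1) hGk_meas hG2 hhk_meas hh2 (hunbiased k hk1), sub_self]
    -- variance bound
    have hvarb : ∫ ω, ‖X ω‖ ^ 2 ∂P ≤ σ ^ 2 / n := by
      have h1 : ∫ ω, ‖X ω‖ ^ 2 ∂P
          = ∫ ω, (P[(fun ω => ‖g k ω - gradient f (z k ω)‖ ^ 2) | ℱ k]) ω ∂P :=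
        (integral_condExp hm).symm
      rw [h1]
      calc ∫ ω, (P[(fun ω => ‖g k ω - gradient f (z k ω)‖ ^ 2) | ℱ k]) ω ∂P
          ≤ ∫ _ω, σ ^ 2 / n ∂P :=
            integral_mono_ae integrable_condExp (integrable_const _) (hvar k hk1)
        _ = σ ^ 2 / n := by simp
    -- contraction bound
    have hcontr : ∫ ω, ‖hk' ω‖ ^ 2 ∂P ≤ (1 - 1/(k:ℝ)) ^ 2 * R k := by
      have hpw : ∀ ω, ‖hk' ω‖ ^ 2 ≤ (1 - 1/(k:ℝ)) ^ 2 * ‖uk ω‖ ^ 2 := by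
        intro ω
        exact sgd_contract f μ L hμ hμL hdiff hsc hlip zstar hzstar k
          (hk0bound k hkk0) (z k ω)
      calc ∫ ω, ‖hk' ω‖ ^ 2 ∂P ≤ ∫ ω, (1 - 1/(k:ℝ)) ^ 2 * ‖uk ω‖ ^ 2 ∂P :=
            integral_mono I1 ((sgd_int_sq hu2).const_mul _) hpw
        _ = (1 - 1/(k:ℝ)) ^ 2 * R k := by rw [integral_const_mul]
    -- A / k^2 identity
    have hAk : α ^ 2 * (σ ^ 2 / n) = A / (k:ℝ) ^ 2 := by
      rw [hαdef, hA]
      field_simp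
    rw [hsplit, hcross, mul_zero, sub_zero, ← hAk]
    have hα2 : 0 ≤ α ^ 2 := sq_nonneg α
    have := mul_le_mul_of_nonneg_left hvarb hα2
    linarith
  -- induction
  set D0 : ℝ := max (2 * A) ((k0:ℝ) ^ 2 * R k0) with hD0
  have hD0A : 2 * A ≤ D0 := le_max_left _ _
  have hD00 : 0 ≤ D0 := le_trans (by linarith) hD0A
  have hind : ∀ j : ℕ, R (k0 + j) ≤ A / ((k0:ℝ) + j) + D0 / ((k0:ℝ) + j) ^ 2 := by
    intro j
    induction j with
    | zero =>
      have hk0R : (0:ℝ) < (k0:ℝ) := by exact_mod_cast Nat.lt_of_lt_of_le Nat.zero_lt_one hk01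
      have h1 : R k0 ≤ D0 / (k0:ℝ) ^ 2 := by
        rw [le_div_iff₀ (by positivity)]
        calc R k0 * (k0:ℝ)^2 = (k0:ℝ)^2 * R k0 := by ring
          _ ≤ D0 := le_max_right _ _
      simp only [Nat.add_zero, Nat.cast_zero, add_zero]
      have h2 : 0 ≤ A / (k0:ℝ) := by positivity
      linarith
    | succ j ih =>
      have hk1 : 1 ≤ k0 + j := le_trans hk01 (Nat.le_add_right _ _)
      have hkk0 : k0 ≤ k0 + j := Nat.le_add_right _ _
      have hstep := step (k0 + j) hk1 hkk0
      have hkcast : ((k0 + j : ℕ) : ℝ) = (k0:ℝ) + j := by push_cast; ring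
      have hkcast1 : ((k0:ℝ) + (j+1:ℕ)) = ((k0:ℝ) + j) + 1 := by push_cast; ring
      have hkge1 : (1:ℝ) ≤ (k0:ℝ) + j := by
        have : (1:ℝ) ≤ (k0:ℝ) := by exact_mod_cast hk01
        have : (0:ℝ) ≤ (j:ℝ) := Nat.cast_nonneg j
        linarith
      have harith := sgd_ind_arith A D0 (R (k0 + j)) ((k0:ℝ) + j) hkge1 hA0 hD0A ih
      rw [hkcast] at hstep
      have : R (k0 + (j+1)) = R ((k0 + j) + 1) := by ring_nf
      rw [this, hkcast1]
      linarith
  -- final constant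
  set D : ℝ := D0 + ∑ j ∈ Finset.range k0, ((j:ℝ) ^ 2 * R j) with hD
  have hsum0 : 0 ≤ ∑ j ∈ Finset.range k0, ((j:ℝ) ^ 2 * R j) :=
    Finset.sum_nonneg (fun j _ => mul_nonneg (sq_nonneg _) (hR0 j))
  have hDD0 : D0 ≤ D := by
    rw [hD]
    linarith
  have hD0' : 0 ≤ D := le_trans hD00 hDD0
  refine ⟨D, hD0', ?_⟩
  intro k hk1
  have hkR : (0:ℝ) < (k:ℝ) := by exact_mod_cast Nat.lt_of_lt_of_le Nat.zero_lt_one hk1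
  have hAkeq : σ ^ 2 / (n * μ ^ 2 * k) = A / (k:ℝ) := by
    rw [hA, div_div]
  rw [hAkeq]
  rcases le_or_gt k0 k with hcase | hcase
  · obtain ⟨j, rfl⟩ := Nat.exists_eq_add_of_le hcase
    have := hind j
    have hkcast : ((k0 + j : ℕ) : ℝ) = (k0:ℝ) + j := by push_cast; ring
    rw [hkcast]
    have hdiv : D0 / ((k0:ℝ) + j) ^ 2 ≤ D / ((k0:ℝ) + j) ^ 2 := by
      gcongr
    show R (k0 + j) ≤ A / ((k0:ℝ) + (j:ℝ)) + D / ((k0:ℝ) + (j:ℝ)) ^ 2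
    linarith
  · -- k < k0
    have hterm : (k:ℝ) ^ 2 * R k ≤ ∑ j ∈ Finset.range k0, ((j:ℝ) ^ 2 * R j) :=
      Finset.single_le_sum (f := fun j : ℕ => (j:ℝ) ^ 2 * R j) (fun j _ => mul_nonneg (sq_nonneg _) (hR0 j))
        (Finset.mem_range.mpr hcase)
    have h1 : R k ≤ D / (k:ℝ) ^ 2 := by
      rw [le_div_iff₀ (by positivity)]
      calc R k * (k:ℝ)^2 = (k:ℝ)^2 * R k := by ring
        _ ≤ D := by rw [hD]; linarith
    have h2 : 0 ≤ A / (k:ℝ) := by positivity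
    show R k ≤ A / (k:ℝ) + D / (k:ℝ) ^ 2
    linarith
end

section
/- Let (u_k)_{k≥1} and (v_k)_{k≥1} be sequences of nonnegative real numbers and a, b, c, V ≥ 0 constants such that for all integers k ≥ 1: u_{k+1} ≤ (1 − 1/k)² u_k + (a/k)·√(u_k v_k) + b v_k / k² + c/k², and v_k ≤ V/k². Then there exists a constant M ≥ 0 (depending only on u_1, a, b, c, V) such that u_k ≤ M/k for all k ≥ 1. -/
/-- The deterministic recursion behind the network-independence analysis of DSGD
(relation (10) of the paper): if the consensus error `v_k` decays like `1/k²`, then the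
optimization error `u_k` governed by
`u_{k+1} ≤ (1 − 1/k)² u_k + (a/k)√(u_k v_k) + b v_k/k² + c/k²`
converges at the centralized rate `O(1/k)`. -/
theorem dsgd_recursion_rate
    (u v : ℕ → ℝ) (a b c V : ℝ)
    (ha : 0 ≤ a) (hb : 0 ≤ b) (hc : 0 ≤ c) (hV : 0 ≤ V)
    (hu_nonneg : ∀ k, 1 ≤ k → 0 ≤ u k)
    (hv_nonneg : ∀ k, 1 ≤ k → 0 ≤ v k)
    (hrec : ∀ k : ℕ, 1 ≤ k →
      u (k + 1) ≤ (1 - 1 / (k : ℝ)) ^ 2 * u k + (a / k) * Real.sqrt (u k * v k)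
        + b * v k / (k : ℝ) ^ 2 + c / (k : ℝ) ^ 2)
    (hv : ∀ k : ℕ, 1 ≤ k → v k ≤ V / (k : ℝ) ^ 2) :
    ∃ M : ℝ, 0 ≤ M ∧ ∀ k : ℕ, 1 ≤ k → u k ≤ M / (k : ℝ) := by
  set M : ℝ := max (u 1) (max (4 * (b * V + c)) (16 * a ^ 2 * V)) with hMdef
  have hM1 : u 1 ≤ M := le_max_left _ _
  have hM2 : 4 * (b * V + c) ≤ M := le_trans (le_max_left _ _) (le_max_right _ _)
  have hM3 : 16 * a ^ 2 * V ≤ M := le_trans (le_max_right _ _) (le_max_right _ _)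
  have hMnn : 0 ≤ M := le_trans (hu_nonneg 1 le_rfl) hM1
  clear_value M
  refine ⟨M, hMnn, ?_⟩
  intro k hk
  induction k, hk using Nat.le_induction with
  | base => simpa using hM1
  | succ k hk ih =>
    have hx1 : (1 : ℝ) ≤ (k : ℝ) := by exact_mod_cast hk
    have hx0 : (0 : ℝ) < (k : ℝ) := by linarith
    set x : ℝ := (k : ℝ) with hxdef
    have hun : 0 ≤ u k := hu_nonneg k hk
    have hvn : 0 ≤ v k := hv_nonneg k hk
    have huk : u k ≤ M / x := ih
    have hvk : v k ≤ V / x ^ 2 := hv k hk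
    -- Bound the sqrt term
    have hprod : u k * v k ≤ M * V / x ^ 2 := by
      calc u k * v k ≤ (M / x) * (V / x ^ 2) :=
            mul_le_mul huk hvk hvn (by positivity)
        _ ≤ M * V / x ^ 2 := by
            rw [div_mul_div_comm]
            apply div_le_div_of_nonneg_left (by positivity) (by positivity)
            nlinarith
    have hsqrt : Real.sqrt (u k * v k) ≤ Real.sqrt (M * V) / x := by
      have h1 : Real.sqrt (u k * v k) ≤ Real.sqrt (M * V / x ^ 2) :=
        Real.sqrt_le_sqrt hprod
      rw [Real.sqrt_div (by positivity), Real.sqrt_sq hx0.le] at h1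
      exact h1
    have haMV : a * Real.sqrt (M * V) ≤ M / 4 := by
      have h1 : a * Real.sqrt (M * V) = Real.sqrt (a ^ 2 * (M * V)) := by
        rw [Real.sqrt_mul (sq_nonneg a), Real.sqrt_sq ha]
      have h2 : a ^ 2 * (M * V) ≤ (M / 4) ^ 2 := by nlinarith
      rw [h1]
      calc Real.sqrt (a ^ 2 * (M * V)) ≤ Real.sqrt ((M / 4) ^ 2) :=
            Real.sqrt_le_sqrt h2
        _ = M / 4 := Real.sqrt_sq (by positivity)
    -- Put the pieces together
    have step : u (k + 1) ≤ (1 - 1 / x) ^ 2 * (M / x) + (M / 2) / x ^ 2 := by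
      have h2 : (a / x) * Real.sqrt (u k * v k) ≤ (M / 4) / x ^ 2 := by
        calc (a / x) * Real.sqrt (u k * v k) ≤ (a / x) * (Real.sqrt (M * V) / x) := by
              apply mul_le_mul_of_nonneg_left hsqrt (by positivity)
          _ = a * Real.sqrt (M * V) / x ^ 2 := by
              rw [div_mul_div_comm, ← sq]
          _ ≤ (M / 4) / x ^ 2 := by
              apply div_le_div_of_nonneg_right haMV -- might be wrong name
              positivity
      have h3 : b * v k / x ^ 2 + c / x ^ 2 ≤ (M / 4) / x ^ 2 := by
        have hbv : b * v k ≤ b * V := by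
          calc b * v k ≤ b * (V / x ^ 2) := mul_le_mul_of_nonneg_left hvk hb
            _ ≤ b * V := by
                apply mul_le_mul_of_nonneg_left _ hb
                rw [div_le_iff₀ (by positivity)]
                nlinarith [mul_nonneg hV (by nlinarith : (0:ℝ) ≤ x ^ 2 - 1)]
        rw [← add_div]
        apply div_le_div_of_nonneg_right _ (by positivity)
        linarith
      have h1 : (1 - 1 / x) ^ 2 * u k ≤ (1 - 1 / x) ^ 2 * (M / x) :=
        mul_le_mul_of_nonneg_left huk (sq_nonneg _)
      have := hrec k hk
      have hhalf : (M / 4) / x ^ 2 + (M / 4) / x ^ 2 = (M / 2) / x ^ 2 := by ring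
      linarith
    have key : (1 - 1 / x) ^ 2 * (M / x) + (M / 2) / x ^ 2 ≤ M / (x + 1) := by
      rw [show (1 - 1 / x) = (x - 1) / x by field_simp]
      rw [div_pow, div_mul_div_comm, div_add_div _ _ (by positivity) (by positivity),
        div_le_div_iff₀ (by positivity) (by positivity)]
      have h2 : (0:ℝ) ≤ x ^ 2 + x - 2 := by nlinarith
      have h3 : (0:ℝ) ≤ M * (x ^ 2 * (x ^ 2 + x - 2)) / 2 :=
        div_nonneg (mul_nonneg hMnn (mul_nonneg (sq_nonneg x) h2)) (by norm_num)
      have heq : M * (x ^ 2 * x * x ^ 2) - ((x - 1) ^ 2 * M * x ^ 2 + x ^ 2 * x * (M / 2)) * (x + 1)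
          = M * (x ^ 2 * (x ^ 2 + x - 2)) / 2 := by ring
      linarith [h3, heq]
    calc u (k + 1) ≤ M / (x + 1) := le_trans step key
      _ = M / ((k + 1 : ℕ) : ℝ) := by push_cast; ring
end
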